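/- For integers r ≥ 1 and L ≥ r, the polynomial P(L,p,r) = Σ_{j=0}^{r} (-1)^j · C(r,j) · (1 - jp)^L satisfies the recursion ∂P(L,p,r)/∂p = L·r·(1-p)^{L-1} · P(L-1, p/(1-p), r-1), and on p ∈ [0, 1/r], P(L,p,r) is nonnegative and monotonically increasing in p. -/

import Mathlib

open scoped BigOperators

/-- The polynomial `P(L,p,r) = ∑_{j=0}^{r} (-1)^j C(r,j) (1 - j p)^L`. -/
noncomputable def Ppoly (L : ℕ) (p : ℝ) (r : ℕ) : ℝ :=
  ∑ j ∈ Finset.range (r + 1), (-1 : ℝ) ^ j * (r.choose j : ℝ) * (1 - (j : ℝ) * p) ^ L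

lemma ppoly_r_zero (L : ℕ) (p : ℝ) : Ppoly L p 0 = 1 := by
  simp [Ppoly]

lemma ppoly_at_zero (L r : ℕ) (hr : 1 ≤ r) : Ppoly L 0 r = 0 := by
  have h := Int.alternating_sum_range_choose (n := r)
  rw [if_neg (by omega)] at h
  have h2 : ((∑ m ∈ Finset.range (r + 1), (-1 : ℤ) ^ m * (r.choose m) : ℤ) : ℝ) = 0 := by
    rw [h]; norm_num
  push_cast at h2
  simpa [Ppoly] using h2

lemma ppoly_continuous (L r : ℕ) : Continuous (fun p : ℝ => Ppoly L p r) := by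
  unfold Ppoly
  exact continuous_finset_sum _ fun j _ => by fun_prop

lemma ppoly_hasDerivAt (M s : ℕ) (p : ℝ) (hp : p ≠ 1) :
    HasDerivAt (fun q : ℝ => Ppoly (M + 1) q (s + 1))
      (((M : ℝ) + 1) * ((s : ℝ) + 1) * (1 - p) ^ M * Ppoly M (p / (1 - p)) s) p := by
  have hne : (1 : ℝ) - p ≠ 0 := sub_ne_zero.mpr (Ne.symm hp)
  have h1 : ∀ j ∈ Finset.range (s + 2),
      HasDerivAt (fun q : ℝ => (-1 : ℝ) ^ j * ((s + 1).choose j : ℝ) * (1 - (j : ℝ) * q) ^ (M + 1))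
        ((-1 : ℝ) ^ j * ((s + 1).choose j : ℝ) *
          (((M : ℝ) + 1) * (1 - (j : ℝ) * p) ^ M * (-(j : ℝ)))) p := by
    intro j _
    have hlin : HasDerivAt (fun q : ℝ => 1 - (j : ℝ) * q) (-(j : ℝ)) p := by
      simpa using ((hasDerivAt_id p).const_mul (j : ℝ)).const_sub 1
    have := (hlin.pow (M + 1)).const_mul ((-1 : ℝ) ^ j * ((s + 1).choose j : ℝ))
    simpa [mul_comm, mul_assoc, mul_left_comm, Nat.add_sub_cancel] using this
  have hsum := HasDerivAt.fun_sum h1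
  have hfun : (fun q : ℝ => Ppoly (M + 1) q (s + 1)) =
      (fun q : ℝ => ∑ j ∈ Finset.range (s + 2),
        (-1 : ℝ) ^ j * ((s + 1).choose j : ℝ) * (1 - (j : ℝ) * q) ^ (M + 1)) := by
    funext q; rfl
  rw [hfun]
  refine hsum.congr_deriv (Eq.symm ?_)
  -- value equality
  rw [Finset.sum_range_succ']
  have hzero : (-1 : ℝ) ^ 0 * (((s + 1).choose 0 : ℕ) : ℝ) *
      (((M : ℝ) + 1) * (1 - ((0 : ℕ) : ℝ) * p) ^ M * (-((0 : ℕ) : ℝ))) = 0 := by norm_num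
  rw [hzero, add_zero]
  unfold Ppoly
  rw [Finset.mul_sum]
  apply Finset.sum_congr rfl
  intro i _
  have hpow : (1 - p) ^ M * (1 - (i : ℝ) * (p / (1 - p))) ^ M = (1 - ((i : ℝ) + 1) * p) ^ M := by
    rw [← mul_pow]
    congr 1
    field_simp
    ring
  have hc : (((s + 1).choose (i + 1) : ℕ) : ℝ) * ((i : ℝ) + 1) = ((s : ℝ) + 1) * ((s.choose i : ℕ) : ℝ) := by
    have := Nat.add_one_mul_choose_eq s i
    have h2 : ((s + 1) * s.choose i : ℕ) = ((s + 1).choose (i + 1) * (i + 1) : ℕ) := this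
    exact_mod_cast h2.symm
  push_cast
  calc ((M : ℝ) + 1) * ((s : ℝ) + 1) * (1 - p) ^ M *
        ((-1) ^ i * (s.choose i : ℝ) * (1 - (i : ℝ) * (p / (1 - p))) ^ M)
      = ((M : ℝ) + 1) * (((s : ℝ) + 1) * (s.choose i : ℝ)) * (-1) ^ i *
        ((1 - p) ^ M * (1 - (i : ℝ) * (p / (1 - p))) ^ M) := by ring
    _ = ((M : ℝ) + 1) * ((((s + 1).choose (i + 1) : ℕ) : ℝ) * ((i : ℝ) + 1)) * (-1) ^ i *
        (1 - ((i : ℝ) + 1) * p) ^ M := by rw [hc, hpow]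
    _ = (-1) ^ (i + 1) * (((s + 1).choose (i + 1) : ℕ) : ℝ) *
        (((M : ℝ) + 1) * (1 - ((i : ℝ) + 1) * p) ^ M * (-((i : ℝ) + 1))) := by
        rw [pow_succ]; ring

lemma ppoly_mono_aux (s L : ℕ) (hL : s + 1 ≤ L)
    (ih : ∀ M, s ≤ M → ∀ q : ℝ, 0 ≤ q → q * s ≤ 1 → 0 ≤ Ppoly M q s) :
    MonotoneOn (fun p : ℝ => Ppoly L p (s + 1)) (Set.Icc (0 : ℝ) (1 / ((s : ℝ) + 1))) := by
  obtain ⟨M, rfl⟩ : ∃ M, L = M + 1 := ⟨L - 1, by omega⟩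
  have hs1 : (0 : ℝ) < (s : ℝ) + 1 := by positivity
  have hderiv : ∀ x : ℝ, x ≠ 1 → HasDerivAt (fun p : ℝ => Ppoly (M + 1) p (s + 1))
      (((M : ℝ) + 1) * ((s : ℝ) + 1) * (1 - x) ^ M * Ppoly M (x / (1 - x)) s) x :=
    fun x hx => ppoly_hasDerivAt M s x hx
  apply monotoneOn_of_deriv_nonneg (convex_Icc _ _) (ppoly_continuous _ _).continuousOn
  · intro x hx
    rw [interior_Icc] at hx
    have hx1 : x ≠ 1 := by
      have : x < 1 / ((s : ℝ) + 1) := hx.2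
      have hle : 1 / ((s : ℝ) + 1) ≤ 1 := by
        rw [div_le_one hs1]; linarith
      intro h; rw [h] at this; linarith
    exact (hderiv x hx1).differentiableAt.differentiableWithinAt
  · intro x hx
    rw [interior_Icc] at hx
    obtain ⟨hx0, hxu⟩ := hx
    have hxu' : x * ((s : ℝ) + 1) < 1 := by
      rw [lt_div_iff₀ hs1] at hxu; exact hxu
    have hx1 : x < 1 := by nlinarith
    have hx1' : x ≠ 1 := ne_of_lt hx1
    rw [(hderiv x hx1').deriv]
    have hsub : (0 : ℝ) < 1 - x := by linarith
    have hq0 : 0 ≤ x / (1 - x) := div_nonneg (le_of_lt hx0) (le_of_lt hsub)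
    have hq1 : (x / (1 - x)) * s ≤ 1 := by
      rw [div_mul_eq_mul_div, div_le_one hsub]
      nlinarith
    have hP := ih M (by omega) (x / (1 - x)) hq0 hq1
    have h1 : (0 : ℝ) ≤ (1 - x) ^ M := le_of_lt (pow_pos hsub M)
    positivity

lemma ppoly_nonneg : ∀ s L : ℕ, s ≤ L → ∀ p : ℝ, 0 ≤ p → p * s ≤ 1 → 0 ≤ Ppoly L p s := by
  intro s
  induction s with
  | zero => intro L _ p _ _; rw [ppoly_r_zero]; norm_num
  | succ s ih =>
    intro L hL p hp0 hp1
    have hs1 : (0 : ℝ) < (s : ℝ) + 1 := by positivity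
    have hmem : p ∈ Set.Icc (0 : ℝ) (1 / ((s : ℝ) + 1)) := by
      constructor
      · exact hp0
      · rw [le_div_iff₀ hs1]
        push_cast at hp1
        linarith
    have hmono := ppoly_mono_aux s L hL ih
    have h0 : (0 : ℝ) ∈ Set.Icc (0 : ℝ) (1 / ((s : ℝ) + 1)) :=
      ⟨le_refl 0, by positivity⟩
    have := hmono h0 hmem hmem.1
    simpa [ppoly_at_zero L (s + 1) (by omega)] using this

theorem stmt9 (L r : ℕ) (hr : 1 ≤ r) (hL : r ≤ L) :
    (∀ p : ℝ, p ≠ 1 →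
        HasDerivAt (fun q : ℝ => Ppoly L q r)
          ((L : ℝ) * (r : ℝ) * (1 - p) ^ (L - 1) * Ppoly (L - 1) (p / (1 - p)) (r - 1)) p)
      ∧ (∀ p ∈ Set.Icc (0 : ℝ) (1 / (r : ℝ)), 0 ≤ Ppoly L p r)
      ∧ MonotoneOn (fun p : ℝ => Ppoly L p r) (Set.Icc (0 : ℝ) (1 / (r : ℝ))) := by
  obtain ⟨s, rfl⟩ : ∃ s, r = s + 1 := ⟨r - 1, by omega⟩
  obtain ⟨M, rfl⟩ : ∃ M, L = M + 1 := ⟨L - 1, by omega⟩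
  have hcast : ((s : ℝ) + 1) = ((s + 1 : ℕ) : ℝ) := by push_cast; ring
  refine ⟨?_, ?_, ?_⟩
  · intro p hp
    have := ppoly_hasDerivAt M s p hp
    simpa [Nat.add_sub_cancel] using this
  · intro p hp
    apply ppoly_nonneg (s + 1) (M + 1) hL p hp.1
    have := hp.2
    push_cast
    rw [le_div_iff₀ (by positivity : (0:ℝ) < ((s+1:ℕ):ℝ))] at this
    push_cast at this
    linarith
  · have := ppoly_mono_aux s (M + 1) hL (ppoly_nonneg s)
    rwa [hcast] at this
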